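/- Fix an integer t ≥ 2 and positive integers r, s both divisible by t, and set n = (r+s)/t. Then the coefficient of x^r in the polynomial (1 + x + x^2 + ... + x^n)^t equals Σ_{j=0}^{⌊r/(n+1)⌋} (−1)^j C(t,j) C(r − (n+1)j + t − 1, t−1); equivalently, the number of t-cores in Par_{r,s} is given by this alternating sum. -/

import Mathlib

open Finset

/-- Partitions in the `r × s` rectangle: weakly decreasing `r`-tuples with parts at most `s`. -/
def IsRectPartition (r s : ℕ) (lam : Fin r → ℕ) : Prop :=
  (∀ i j : Fin r, i ≤ j → lam j ≤ lam i) ∧ ∀ i, lam i ≤ s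

/-- The beta-set `β(λ) = {λ_i + r − i : 1 ≤ i ≤ r}` (with 0-indexed `i`). -/
def betaSet (r : ℕ) (lam : Fin r → ℕ) : Finset ℕ :=
  Finset.image (fun i : Fin r => lam i + (r - 1 - (i : ℕ))) Finset.univ

/-- `λ` is a `t`-core: for every `b ∈ β(λ)` with `b ≥ t`, also `b − t ∈ β(λ)`. -/
def IsTCore (r t : ℕ) (lam : Fin r → ℕ) : Prop :=
  ∀ b ∈ betaSet r lam, t ≤ b → b - t ∈ betaSet r lam

/-- `n_i = ⌊(r+s+t−1−i)/t⌋`. -/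
def nres (r s t i : ℕ) : ℕ := (r + s + t - 1 - i) / t

/-- `a_i(λ) = #{b ∈ β(λ) : b ≡ i (mod t)}`. -/
def aCount (r t : ℕ) (lam : Fin r → ℕ) (i : ℕ) : ℕ :=
  ((betaSet r lam).filter fun b => b % t = i).card

/-- The justification `J(λ)`: in each residue class `i` mod `t`, the `a_i(λ)` smallest
nonnegative integers congruent to `i`. -/
def justification (r t : ℕ) (lam : Fin r → ℕ) : Finset ℕ :=
  (Finset.range t).biUnion fun i =>
    (Finset.range (aCount r t lam i)).image fun m => i + m * t

/-- The size of the `t`-core of `λ`: `Σ_{b ∈ J(λ)} b − r(r−1)/2`. -/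
def coreSize (r t : ℕ) (lam : Fin r → ℕ) : ℕ :=
  (∑ b ∈ justification r t lam, b) - r * (r - 1) / 2

/-- A downward-closed finset of naturals is an initial segment. -/
lemma range_card_of_dclosed (S : Finset ℕ) (h : ∀ m, m + 1 ∈ S → m ∈ S) :
    S = Finset.range S.card := by
  have hdown : ∀ d x, x ∈ S → x - d ∈ S := by
    intro d
    induction d with
    | zero => simpa using fun x hx => hx
    | succ d ih =>
      intro x hx
      rcases le_or_gt (x - d) 0 with h0 | h0
      · have heq : x - (d+1) = x - d := by omega
        rw [heq]; exact ih x hx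
      · have h1 : (x - (d+1)) + 1 = x - d := by omega
        exact h _ (h1 ▸ ih x hx)
  ext m
  simp only [Finset.mem_range]
  constructor
  · intro hm
    have hsub : Finset.range (m+1) ⊆ S := by
      intro y hy
      simp only [Finset.mem_range] at hy
      have h2 := hdown (m - y) m hm
      have h3 : m - (m - y) = y := by omega
      rwa [h3] at h2
    have := Finset.card_le_card hsub
    simpa using this
  · intro hm
    by_contra hmS
    have hsub : S ⊆ Finset.range m := by
      intro x hx
      simp only [Finset.mem_range]
      by_contra hxm
      push_neg at hxm
      have h2 := hdown (x - m) x hx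
      have h3 : x - (x - m) = m := by omega
      rw [h3] at h2
      exact hmS h2
    have := Finset.card_le_card hsub
    simp at this
    omega

/-- In a `t`-closed finset, each residue class is an initial segment of its residue class. -/
lemma filter_residue_eq (t : ℕ) (ht : 1 ≤ t) (B : Finset ℕ)
    (hB : ∀ b ∈ B, t ≤ b → b - t ∈ B) (i : ℕ) (hi : i < t) :
    B.filter (fun b => b % t = i) =
      (Finset.range ((B.filter (fun b => b % t = i)).card)).image (fun m => i + m * t) := by
  set S := B.filter (fun b => b % t = i) with hS
  set M := S.image (fun b => b / t) with hMdef
  have hmemM : ∀ m, m ∈ M ↔ i + m * t ∈ B := by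
    intro m
    simp only [hMdef, Finset.mem_image, hS, Finset.mem_filter]
    constructor
    · rintro ⟨b, ⟨hbB, hbi⟩, rfl⟩
      have heq : i + b / t * t = b := by
        have := Nat.mod_add_div' b t; omega
      rwa [heq]
    · intro hb
      refine ⟨i + m * t, ⟨hb, ?_⟩, ?_⟩
      · simp [Nat.add_mul_mod_self_right, Nat.mod_eq_of_lt hi]
      · rw [Nat.add_mul_div_right _ _ (by omega : 0 < t), Nat.div_eq_of_lt hi]
        omega
  have hMclosed : ∀ m, m + 1 ∈ M → m ∈ M := by
    intro m hm
    rw [hmemM] at hm ⊢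
    have h1 := hB _ hm (by nlinarith)
    have heq : i + (m + 1) * t - t = i + m * t := by ring_nf; omega
    rwa [heq] at h1
  have hMcard : M.card = S.card := by
    rw [hMdef]
    apply Finset.card_image_of_injOn
    intro b1 hb1 b2 hb2 heq
    simp only [hS, Finset.coe_filter, Set.mem_setOf_eq] at hb1 hb2
    simp only at heq
    have e1 := Nat.mod_add_div' b1 t
    have e2 := Nat.mod_add_div' b2 t
    rw [heq] at e1
    omega
  have himg : M.image (fun m => i + m * t) = S := by
    ext b
    simp only [Finset.mem_image]
    constructor
    · rintro ⟨m, hm, rfl⟩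
      rw [hmemM] at hm
      simp only [hS, Finset.mem_filter]
      exact ⟨hm, by simp [Nat.add_mul_mod_self_right, Nat.mod_eq_of_lt hi]⟩
    · intro hb
      have hb' := Finset.mem_filter.mp hb
      refine ⟨b / t, ?_, ?_⟩
      · rw [hmemM]
        have heq : i + b / t * t = b := by
          have := Nat.mod_add_div' b t; omega
        rw [heq]; exact hb'.1
      · have := Nat.mod_add_div' b t; omega
  have hMr : M = Finset.range M.card := range_card_of_dclosed M hMclosed
  rw [← hMcard, ← hMr]
  exact himg.symm

lemma strictMono_fin_diff {r : ℕ} {f : Fin r → ℕ} (hf : StrictMono f) :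
    ∀ (k : ℕ) (a b : Fin r), (b : ℕ) = k → a ≤ b → f a + ((b : ℕ) - (a : ℕ)) ≤ f b := by
  intro k
  induction k with
  | zero =>
    intro a b hb hab
    have : a = b := le_antisymm hab (by omega)
    subst this; simp
  | succ k ih =>
    intro a b hb hab
    rcases eq_or_lt_of_le hab with h | h
    · subst h; simp
    · have hk : k < r := by have := b.isLt; omega
      set b' : Fin r := ⟨k, hk⟩ with hb'
      have hab' : a ≤ b' := by
        have : (a : ℕ) < (b : ℕ) := h
        simp [Fin.le_def, hb']; omega
      have h1 := ih a b' rfl hab'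
      have h2 : f b' < f b := hf (by simp [Fin.lt_def, hb']; omega)
      simp only [hb'] at h1 h2
      have : (a : ℕ) ≤ k := by
        have : (a : ℕ) < (b : ℕ) := h
        omega
      omega

lemma strictMono_fin_le_apply {r : ℕ} {f : Fin r → ℕ} (hf : StrictMono f) (j : Fin r) :
    (j : ℕ) ≤ f j := by
  have hj0 : (0 : ℕ) < r := lt_of_le_of_lt (Nat.zero_le _) j.isLt
  have h0 : (⟨0, hj0⟩ : Fin r) ≤ j := by simp [Fin.le_def]
  have := strictMono_fin_diff hf (j : ℕ) ⟨0, hj0⟩ j rfl h0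
  simp only at this
  omega

/-- The beta set, reindexed by `Fin.rev`. -/
lemma betaSet_eq_image (r : ℕ) (lam : Fin r → ℕ) :
    betaSet r lam = Finset.image (fun j : Fin r => lam j.rev + (j : ℕ)) Finset.univ := by
  unfold betaSet
  ext b
  simp only [Finset.mem_image, Finset.mem_univ, true_and]
  constructor
  · rintro ⟨i, rfl⟩
    refine ⟨i.rev, ?_⟩
    rw [Fin.rev_rev]
    congr 1
    rw [Fin.val_rev]
    have := i.isLt; omega
  · rintro ⟨j, rfl⟩
    refine ⟨j.rev, ?_⟩
    congr 1
    rw [Fin.val_rev]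
    have := j.isLt; omega

lemma g_strictMono {r s : ℕ} {lam : Fin r → ℕ} (hlam : IsRectPartition r s lam) :
    StrictMono (fun j : Fin r => lam j.rev + (j : ℕ)) := by
  intro a b hab
  have h1 : b.rev ≤ a.rev := by
    rw [Fin.rev_le_rev]; exact le_of_lt hab
  have h2 : lam a.rev ≤ lam b.rev := hlam.1 b.rev a.rev h1
  have h3 : (a : ℕ) < (b : ℕ) := hab
  simp only []
  omega

lemma betaSet_card {r s : ℕ} {lam : Fin r → ℕ} (hlam : IsRectPartition r s lam) :
    (betaSet r lam).card = r := by
  rw [betaSet_eq_image, Finset.card_image_of_injective _ (g_strictMono hlam).injective]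
  simp

lemma betaSet_subset {r s : ℕ} (hr : 1 ≤ r) {lam : Fin r → ℕ} (hlam : IsRectPartition r s lam) :
    betaSet r lam ⊆ Finset.range (r + s) := by
  intro b hb
  unfold betaSet at hb
  simp only [Finset.mem_image, Finset.mem_univ, true_and] at hb
  obtain ⟨i, rfl⟩ := hb
  have h1 := hlam.2 i
  simp only [Finset.mem_range]
  omega

lemma betaSet_injOn {r s : ℕ} {lam mu : Fin r → ℕ} (hlam : IsRectPartition r s lam)
    (hmu : IsRectPartition r s mu) (h : betaSet r lam = betaSet r mu) : lam = mu := by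
  have hcl : (betaSet r lam).card = r := betaSet_card hlam
  have h1 : (fun j : Fin r => lam j.rev + (j : ℕ)) = (betaSet r lam).orderEmbOfFin hcl := by
    apply Finset.orderEmbOfFin_unique
    · intro x
      rw [betaSet_eq_image]
      exact Finset.mem_image_of_mem _ (Finset.mem_univ x)
    · exact g_strictMono hlam
  have hcm : (betaSet r lam).card = r := by rw [h]; exact betaSet_card hmu
  have h2 : (fun j : Fin r => mu j.rev + (j : ℕ)) = (betaSet r lam).orderEmbOfFin hcm := by
    apply Finset.orderEmbOfFin_unique
    · intro x
      rw [h, betaSet_eq_image]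
      exact Finset.mem_image_of_mem _ (Finset.mem_univ x)
    · exact g_strictMono hmu
  funext i
  have h3 : lam i.rev.rev + ((i.rev : ℕ)) = mu i.rev.rev + ((i.rev : ℕ)) := by
    have := congrFun h1 i.rev
    have := congrFun h2 i.rev
    simp only [Fin.rev_rev] at *
    omega
  rw [Fin.rev_rev] at h3
  omega

/-- Reconstructing a partition from an `r`-element finset. -/
noncomputable def lamOf (r : ℕ) (B : Finset ℕ) (h : B.card = r) : Fin r → ℕ :=
  fun i => B.orderEmbOfFin h i.rev - (i.rev : ℕ)

lemma lamOf_spec (r s : ℕ) (hr : 1 ≤ r) (B : Finset ℕ) (h : B.card = r)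
    (hB : B ⊆ Finset.range (r + s)) :
    IsRectPartition r s (lamOf r B h) ∧ betaSet r (lamOf r B h) = B := by
  set emb := B.orderEmbOfFin h with hemb
  have hmono : StrictMono emb := (B.orderEmbOfFin h).strictMono
  have hle : ∀ j : Fin r, (j : ℕ) ≤ emb j := fun j => strictMono_fin_le_apply hmono j
  have hub : ∀ j : Fin r, emb j < r + s := by
    intro j
    have := hB (Finset.orderEmbOfFin_mem B h j)
    simpa using this
  have hdiff : ∀ a b : Fin r, a ≤ b → emb a + ((b : ℕ) - (a : ℕ)) ≤ emb b :=
    fun a b hab => strictMono_fin_diff hmono (b : ℕ) a b rfl hab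
  constructor
  constructor
  · intro i j hij
    have h1 : j.rev ≤ i.rev := by rw [Fin.rev_le_rev]; exact hij
    have h2 := hdiff j.rev i.rev h1
    have h3 := hle j.rev
    simp only [lamOf, ← hemb]
    have h4 : (j.rev : ℕ) ≤ (i.rev : ℕ) := h1
    omega
  · intro i
    have hrr : r - 1 < r := by omega
    have hlast : i.rev ≤ (⟨r - 1, hrr⟩ : Fin r) := by
      simp [Fin.le_def]
      have := i.rev.isLt; omega
    have h2 := hdiff i.rev ⟨r - 1, hrr⟩ hlast
    have h3 := hub (⟨r - 1, hrr⟩ : Fin r)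
    have h4 : (i.rev : ℕ) ≤ r - 1 := by have := i.rev.isLt; omega
    simp only [lamOf, ← hemb]
    simp only at h2
    omega
  · rw [betaSet_eq_image]
    have hfun : ∀ j : Fin r, lamOf r B h j.rev + (j : ℕ) = emb j := by
      intro j
      simp only [lamOf, ← hemb, Fin.rev_rev]
      have := hle j
      omega
    ext b
    simp only [Finset.mem_image, Finset.mem_univ, true_and]
    constructor
    · rintro ⟨j, rfl⟩
      rw [hfun j]
      exact Finset.orderEmbOfFin_mem B h j
    · intro hb
      have : b ∈ Set.range emb := by
        rw [hemb, Finset.range_orderEmbOfFin]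
        exact hb
      obtain ⟨j, hj⟩ := this
      exact ⟨j, by rw [hfun j, hj]⟩

/-- The union of initial segments of residue classes. -/
def unionOf (t : ℕ) (f : Fin t → ℕ) : Finset ℕ :=
  Finset.univ.biUnion fun i : Fin t => (Finset.range (f i)).image fun m => (i : ℕ) + m * t

lemma mem_unionOf {t : ℕ} (ht : 1 ≤ t) (f : Fin t → ℕ) (b : ℕ) :
    b ∈ unionOf t f ↔ b / t < f ⟨b % t, Nat.mod_lt b (by omega)⟩ := by
  unfold unionOf
  simp only [Finset.mem_biUnion, Finset.mem_univ, true_and, Finset.mem_image, Finset.mem_range]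
  constructor
  · rintro ⟨i, m, hm, rfl⟩
    have h1 : ((i : ℕ) + m * t) % t = (i : ℕ) := by
      simp [Nat.add_mul_mod_self_right, Nat.mod_eq_of_lt i.isLt]
    have h2 : ((i : ℕ) + m * t) / t = m := by
      rw [Nat.add_mul_div_right _ _ (by omega : 0 < t), Nat.div_eq_of_lt i.isLt]; omega
    simp only [h1, h2]
    exact hm
  · intro hb
    refine ⟨⟨b % t, Nat.mod_lt b (by omega)⟩, b / t, hb, ?_⟩
    simp only
    have := Nat.mod_add_div' b t
    omega

lemma unionOf_card {t : ℕ} (ht : 1 ≤ t) (f : Fin t → ℕ) :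
    (unionOf t f).card = ∑ i : Fin t, f i := by
  unfold unionOf
  rw [Finset.card_biUnion]
  · apply Finset.sum_congr rfl
    intro i _
    rw [Finset.card_image_of_injective, Finset.card_range]
    intro a b hab
    simp only at hab
    have := i.isLt
    nlinarith [Nat.mul_le_mul_right t (Nat.le_of_lt_succ (Nat.lt_succ_of_le (le_refl a)))]
  · intro i _ j _ hij
    simp only [Finset.disjoint_left, Finset.mem_image, Finset.mem_range]
    rintro b ⟨m, hm, rfl⟩ ⟨m', hm', heq⟩
    apply hij
    apply Fin.ext
    have e1 : ((i : ℕ) + m * t) % t = (i : ℕ) := by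
      simp [Nat.add_mul_mod_self_right, Nat.mod_eq_of_lt i.isLt]
    have e2 : ((j : ℕ) + m' * t) % t = (j : ℕ) := by
      simp [Nat.add_mul_mod_self_right, Nat.mod_eq_of_lt j.isLt]
    rw [heq] at e2
    omega

lemma unionOf_subset {t n : ℕ} (ht : 1 ≤ t) (f : Fin t → ℕ) (hf : ∀ i, f i ≤ n) :
    unionOf t f ⊆ Finset.range (n * t) := by
  intro b hb
  unfold unionOf at hb
  simp only [Finset.mem_biUnion, Finset.mem_univ, true_and, Finset.mem_image,
    Finset.mem_range] at hb ⊢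
  obtain ⟨i, m, hm, rfl⟩ := hb
  have h1 : m < n := lt_of_lt_of_le hm (hf i)
  have h2 := i.isLt
  calc (i : ℕ) + m * t < t + m * t := by omega
    _ = (m + 1) * t := by ring
    _ ≤ n * t := Nat.mul_le_mul_right t h1

lemma unionOf_closed {t : ℕ} (ht : 1 ≤ t) (f : Fin t → ℕ) :
    ∀ b ∈ unionOf t f, t ≤ b → b - t ∈ unionOf t f := by
  intro b hb htb
  rw [mem_unionOf ht] at hb ⊢
  have hq1 : 1 ≤ b / t := (Nat.one_le_div_iff (by omega)).mpr htb
  obtain ⟨q, hq⟩ : ∃ q, b / t = q + 1 := ⟨b / t - 1, by omega⟩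
  have hbt : b - t = b % t + (b / t - 1) * t := by
    have h0 := Nat.mod_add_div' b t
    rw [hq] at h0 ⊢
    simp only [Nat.add_sub_cancel]
    have hqt : (q + 1) * t = q * t + t := by ring
    omega
  have hmod : (b - t) % t = b % t := by
    rw [hbt, Nat.add_mul_mod_self_right, Nat.mod_eq_of_lt (Nat.mod_lt b (by omega : 0 < t))]
  have hdiv : (b - t) / t = b / t - 1 := by
    rw [hbt, Nat.add_mul_div_right _ _ (by omega : 0 < t),
      Nat.div_eq_of_lt (Nat.mod_lt b (by omega))]
    omega
  rw [hdiv]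
  have : (⟨(b - t) % t, Nat.mod_lt (b - t) (by omega : 0 < t)⟩ : Fin t)
      = ⟨b % t, Nat.mod_lt b (by omega : 0 < t)⟩ := Fin.ext hmod
  rw [this]
  omega

lemma mem_image_residue {t : ℕ} (ht : 1 ≤ t) (a i b : ℕ) (hi : i < t) (hbi : b % t = i) :
    b ∈ (Finset.range a).image (fun m => i + m * t) ↔ b / t < a := by
  simp only [Finset.mem_image, Finset.mem_range]
  constructor
  · rintro ⟨m, hm, rfl⟩
    rwa [Nat.add_mul_div_right _ _ (by omega : 0 < t), Nat.div_eq_of_lt hi, Nat.zero_add]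
  · intro hb
    refine ⟨b / t, hb, ?_⟩
    have := Nat.mod_add_div' b t
    omega

lemma unionOf_filter_card {t : ℕ} (ht : 1 ≤ t) (f : Fin t → ℕ) (i : Fin t) :
    ((unionOf t f).filter (fun b => b % t = (i : ℕ))).card = f i := by
  have himg : (unionOf t f).filter (fun b => b % t = (i : ℕ))
      = (Finset.range (f i)).image (fun m => (i : ℕ) + m * t) := by
    ext b
    simp only [Finset.mem_filter]
    constructor
    · rintro ⟨hb, hbi⟩
      rw [mem_image_residue ht _ _ _ i.isLt hbi]
      rw [mem_unionOf ht] at hb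
      have : (⟨b % t, Nat.mod_lt b (by omega : 0 < t)⟩ : Fin t) = i := Fin.ext hbi
      rwa [this] at hb
    · intro hb
      have hbi : b % t = (i : ℕ) := by
        simp only [Finset.mem_image, Finset.mem_range] at hb
        obtain ⟨m, _, rfl⟩ := hb
        simp [Nat.add_mul_mod_self_right, Nat.mod_eq_of_lt i.isLt]
      refine ⟨?_, hbi⟩
      rw [mem_image_residue ht _ _ _ i.isLt hbi] at hb
      rw [mem_unionOf ht]
      have : (⟨b % t, Nat.mod_lt b (by omega : 0 < t)⟩ : Fin t) = i := Fin.ext hbi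
      rwa [this]
  rw [himg, Finset.card_image_of_injective, Finset.card_range]
  intro a b hab
  simp only at hab
  have h2 : a * t = b * t := by omega
  exact Nat.eq_of_mul_eq_mul_right (by omega) h2

lemma betaSet_tcore_eq {r s t : ℕ} (ht : 1 ≤ t) {lam : Fin r → ℕ}
    (hlam : IsRectPartition r s lam) (hcore : IsTCore r t lam) :
    betaSet r lam = unionOf t (fun i : Fin t => aCount r t lam (i : ℕ)) := by
  ext b
  rw [mem_unionOf ht]
  have hbt : b % t < t := Nat.mod_lt b (by omega)
  have hres := filter_residue_eq t ht (betaSet r lam) hcore (b % t) hbt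
  constructor
  · intro hb
    have hbS : b ∈ (betaSet r lam).filter (fun x => x % t = b % t) :=
      Finset.mem_filter.mpr ⟨hb, rfl⟩
    rw [hres, mem_image_residue ht _ _ _ hbt rfl] at hbS
    exact hbS
  · intro hb
    have hbS : b ∈ (betaSet r lam).filter (fun x => x % t = b % t) := by
      rw [hres, mem_image_residue ht _ _ _ hbt rfl]
      exact hb
    exact (Finset.mem_filter.mp hbS).1

lemma aCount_sum {r s t : ℕ} (ht : 1 ≤ t) {lam : Fin r → ℕ}
    (hlam : IsRectPartition r s lam) (hcore : IsTCore r t lam) :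
    ∑ i : Fin t, aCount r t lam (i : ℕ) = r := by
  rw [← unionOf_card ht, ← betaSet_tcore_eq ht hlam hcore, betaSet_card hlam]

lemma aCount_le {r s t n : ℕ} (hr : 1 ≤ r) (ht : 1 ≤ t) (hn : r + s = n * t)
    {lam : Fin r → ℕ} (hlam : IsRectPartition r s lam) (hcore : IsTCore r t lam) (i : Fin t) :
    aCount r t lam (i : ℕ) ≤ n := by
  by_contra hcon
  push_neg at hcon
  set a := aCount r t lam (i : ℕ) with ha
  have hb : (i : ℕ) + (a - 1) * t ∈ betaSet r lam := by
    rw [betaSet_tcore_eq ht hlam hcore]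
    unfold unionOf
    simp only [Finset.mem_biUnion, Finset.mem_univ, true_and, Finset.mem_image, Finset.mem_range]
    exact ⟨i, a - 1, by omega, rfl⟩
  have hsub := betaSet_subset hr hlam hb
  simp only [Finset.mem_range, hn] at hsub
  have h1 : n * t ≤ (a - 1) * t := Nat.mul_le_mul_right t (by omega)
  omega

lemma tcore_ncard (r s t n : ℕ) (hr : 1 ≤ r) (ht : 1 ≤ t) (hn : r + s = n * t) :
    {lam : Fin r → ℕ | IsRectPartition r s lam ∧ IsTCore r t lam}.ncard
      = ((Fintype.piFinset (fun _ : Fin t => Finset.range (n + 1))).filter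
          (fun f => ∑ i, f i = r)).card := by
  set S := {lam : Fin r → ℕ | IsRectPartition r s lam ∧ IsTCore r t lam} with hSdef
  set T := ((Fintype.piFinset (fun _ : Fin t => Finset.range (n + 1))).filter
      (fun f => ∑ i, f i = r)) with hTdef
  set Φ : (Fin r → ℕ) → (Fin t → ℕ) := fun lam i => aCount r t lam (i : ℕ) with hΦ
  have hbij : Set.BijOn Φ S ↑T := by
    refine ⟨?_, ?_, ?_⟩
    · rintro lam ⟨hlam, hcore⟩
      rw [hTdef]
      simp only [Finset.coe_filter, Set.mem_setOf_eq, Fintype.mem_piFinset, Finset.mem_range]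
      constructor
      · intro i
        have := aCount_le hr ht hn hlam hcore i
        have h2 : Φ lam i = aCount r t lam (i : ℕ) := rfl
        omega
      · exact aCount_sum ht hlam hcore
    · rintro lam ⟨hlam, hcore⟩ mu ⟨hmu, hmucore⟩ heq
      apply betaSet_injOn hlam hmu
      rw [betaSet_tcore_eq ht hlam hcore, betaSet_tcore_eq ht hmu hmucore]
      exact congrArg (unionOf t) heq
    · intro f hf
      rw [hTdef] at hf
      simp only [Finset.coe_filter, Set.mem_setOf_eq, Fintype.mem_piFinset,
        Finset.mem_range] at hf
      obtain ⟨hfle, hfsum⟩ := hf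
      have hcard : (unionOf t f).card = r := by rw [unionOf_card ht, hfsum]
      have hsub : unionOf t f ⊆ Finset.range (r + s) := by
        rw [hn]
        exact unionOf_subset ht f (fun i => by have := hfle i; omega)
      obtain ⟨hrect, hbeta⟩ := lamOf_spec r s hr (unionOf t f) hcard hsub
      refine ⟨lamOf r (unionOf t f) hcard, ⟨hrect, ?_⟩, ?_⟩
      · intro b hb htb
        rw [hbeta] at hb ⊢
        exact unionOf_closed ht f b hb htb
      · funext i
        show aCount r t (lamOf r (unionOf t f) hcard) (i : ℕ) = f i
        unfold aCount
        rw [hbeta]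
        exact unionOf_filter_card ht f i
  calc S.ncard = (Φ '' S).ncard := (Set.ncard_image_of_injOn hbij.injOn).symm
    _ = (↑T : Set (Fin t → ℕ)).ncard := by rw [hbij.image_eq]
    _ = T.card := Set.ncard_coe_finset T

lemma coeff_pow_eq_card (n t r : ℕ) :
    ((∑ j ∈ Finset.range (n + 1), (Polynomial.X : Polynomial ℤ) ^ j) ^ t).coeff r
      = ((Fintype.piFinset (fun _ : Fin t => Finset.range (n + 1))).filter
          (fun f => ∑ i, f i = r)).card := by
  have h1 : (∑ j ∈ Finset.range (n + 1), (Polynomial.X : Polynomial ℤ) ^ j) ^ t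
      = ∏ _i : Fin t, (∑ j ∈ Finset.range (n + 1), (Polynomial.X : Polynomial ℤ) ^ j) := by
    rw [Finset.prod_const, Finset.card_univ, Fintype.card_fin]
  rw [h1, Finset.prod_univ_sum]
  simp_rw [Finset.prod_pow_eq_pow_sum]
  rw [Polynomial.finset_sum_coeff]
  simp_rw [Polynomial.coeff_X_pow]
  have hcongr : ∀ x ∈ Fintype.piFinset fun _ : Fin t => Finset.range (n + 1),
      (if r = ∑ i, x i then (1 : ℤ) else 0) = if ∑ i, x i = r then 1 else 0 := by
    intro x _
    simp [eq_comm]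
  rw [Finset.sum_congr rfl hcongr, Finset.sum_boole]

open PowerSeries in
lemma coeff_pow_eq_altsum (n t r : ℕ) (ht : 1 ≤ t) :
    ((∑ j ∈ Finset.range (n + 1), (Polynomial.X : Polynomial ℤ) ^ j) ^ t).coeff r
      = ∑ j ∈ Finset.range (t + 1), (-1 : ℤ) ^ j * (t.choose j : ℤ) *
          (if (n + 1) * j ≤ r then ((t - 1 + (r - (n + 1) * j)).choose (t - 1) : ℤ) else 0) := by
  set P : Polynomial ℤ := ∑ j ∈ Finset.range (n + 1), Polynomial.X ^ j with hP
  set Q : ℤ⟦X⟧ := ∑ j ∈ Finset.range (n + 1), (X : ℤ⟦X⟧) ^ j with hQ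
  have hPQ : (P : ℤ⟦X⟧) = Q := by
    rw [hP, hQ, ← Polynomial.coeToPowerSeries.ringHom_apply, map_sum]
    apply Finset.sum_congr rfl
    intro j _
    rw [map_pow, Polynomial.coeToPowerSeries.ringHom_apply, Polynomial.coe_X]
  have hcoeff : (P ^ t).coeff r = PowerSeries.coeff r (Q ^ t) := by
    rw [← hPQ, ← Polynomial.coe_pow, Polynomial.coeff_coe]
  have hgeom : Q * (1 - X) = 1 - (X : ℤ⟦X⟧) ^ (n + 1) := by
    have h := geom_sum_mul (X : ℤ⟦X⟧) (n + 1)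
    rw [hQ]
    linear_combination -h
  set U := invOneSubPow ℤ t with hU
  have hUval : (U : ℤ⟦X⟧) = PowerSeries.mk fun k => ((t - 1 + k).choose (t - 1) : ℤ) := by
    have h := PowerSeries.invOneSubPow_val_eq_mk_sub_one_add_choose_of_pos (S := ℤ) (d := t)
      (by omega : 0 < t)
    rw [hU, h]
  have hQt : Q ^ t = (1 - (X : ℤ⟦X⟧) ^ (n + 1)) ^ t * (U : ℤ⟦X⟧) := by
    have h1 : Q ^ t * ((1 - (X : ℤ⟦X⟧)) ^ t * (U : ℤ⟦X⟧))
        = (1 - (X : ℤ⟦X⟧) ^ (n + 1)) ^ t * (U : ℤ⟦X⟧) := by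
      rw [← mul_assoc, ← mul_pow, hgeom]
    have h2 : (1 - (X : ℤ⟦X⟧)) ^ t * (U : ℤ⟦X⟧) = 1 := by
      rw [← invOneSubPow_inv_eq_one_sub_pow ℤ t]
      exact U.inv_val
    rw [h2, mul_one] at h1
    exact h1
  have hbinom : (1 - (X : ℤ⟦X⟧) ^ (n + 1)) ^ t
      = ∑ j ∈ Finset.range (t + 1),
          ((-1 : ℤ) ^ j * (t.choose j : ℤ)) • (X : ℤ⟦X⟧) ^ ((n + 1) * j) := by
    have h := add_pow (-((X : ℤ⟦X⟧) ^ (n + 1))) 1 t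
    have heq : (1 : ℤ⟦X⟧) - (X : ℤ⟦X⟧) ^ (n + 1) = -((X : ℤ⟦X⟧) ^ (n + 1)) + 1 := by ring
    rw [heq, h]
    apply Finset.sum_congr rfl
    intro j _
    rw [neg_pow, ← pow_mul, zsmul_eq_mul]
    push_cast
    ring
  rw [hcoeff, hQt, hbinom, Finset.sum_mul, map_sum]
  apply Finset.sum_congr rfl
  intro j _
  rw [smul_mul_assoc, map_zsmul, smul_eq_mul, PowerSeries.coeff_X_pow_mul' (U : ℤ⟦X⟧) ((n+1)*j) r]
  congr 1
  split_ifs with h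
  · rw [hUval, PowerSeries.coeff_mk]
  · rfl

/-- For `t ∣ r`, `t ∣ s` and `n = (r+s)/t`, the coefficient of `x^r` in
`(1 + x + ⋯ + x^n)^t` equals `Σ_{j=0}^{⌊r/(n+1)⌋} (−1)^j C(t,j) C(r−(n+1)j+t−1, t−1)`;
equivalently, the number of `t`-cores in `Par_{r,s}` equals this alternating sum. -/
theorem coeff_eq_alternating_sum (r s t : ℕ) (hr : 1 ≤ r) (hs : 1 ≤ s) (ht : 2 ≤ t)
    (hrt : t ∣ r) (hst : t ∣ s) :
    ((∑ j ∈ Finset.range ((r + s) / t + 1), (Polynomial.X : Polynomial ℤ) ^ j) ^ t).coeff r =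
        (∑ j ∈ Finset.range (r / ((r + s) / t + 1) + 1),
          (-1 : ℤ) ^ j * (t.choose j : ℤ) *
            (((r - ((r + s) / t + 1) * j + t - 1).choose (t - 1) : ℤ))) ∧
      ({lam : Fin r → ℕ | IsRectPartition r s lam ∧ IsTCore r t lam}.ncard : ℤ) =
        (∑ j ∈ Finset.range (r / ((r + s) / t + 1) + 1),
          (-1 : ℤ) ^ j * (t.choose j : ℤ) *
            (((r - ((r + s) / t + 1) * j + t - 1).choose (t - 1) : ℤ))) := by
  have ht1 : 1 ≤ t := by omega
  set n := (r + s) / t with hndef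
  have hn : r + s = n * t := by
    rw [hndef, Nat.div_mul_cancel (Nat.dvd_add hrt hst)]
  clear hndef
  clear_value n
  have hrlt : r < (n + 1) * t := by
    have h1 : r ≤ n * t := by rw [← hn]; omega
    have h2 : n * t + t ≤ (n + 1) * t := by ring_nf; omega
    omega
  have hdivlt : r / (n + 1) < t := by
    rw [Nat.div_lt_iff_lt_mul (by omega : 0 < n + 1)]
    rw [mul_comm] at hrlt
    exact hrlt
  have hsub : Finset.range (r / (n + 1) + 1) ⊆ Finset.range (t + 1) := by
    apply Finset.range_subset_range.mpr
    exact Nat.add_le_add_right hdivlt.le 1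
  have key : ((∑ j ∈ Finset.range (n + 1), (Polynomial.X : Polynomial ℤ) ^ j) ^ t).coeff r =
      ∑ j ∈ Finset.range (r / (n + 1) + 1),
        (-1 : ℤ) ^ j * (t.choose j : ℤ) * (((r - (n + 1) * j + t - 1).choose (t - 1) : ℤ)) := by
    rw [coeff_pow_eq_altsum n t r ht1]
    rw [← Finset.sum_subset hsub]
    · apply Finset.sum_congr rfl
      intro j hj
      simp only [Finset.mem_range] at hj
      have hjle : (n + 1) * j ≤ r := by
        have h1 : j ≤ r / (n + 1) := Nat.lt_succ_iff.mp hj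
        calc (n + 1) * j ≤ (n + 1) * (r / (n + 1)) := Nat.mul_le_mul_left _ h1
          _ ≤ r := Nat.mul_div_le r (n + 1)
      rw [if_pos hjle]
      have harg : t - 1 + (r - (n + 1) * j) = r - (n + 1) * j + t - 1 := by
        have := hjle
        omega
      rw [harg]
    · intro j hj hj2
      simp only [Finset.mem_range] at hj hj2
      have hjgt : ¬ (n + 1) * j ≤ r := by
        intro hcon
        have h1 : j ≤ r / (n + 1) := (Nat.le_div_iff_mul_le (by omega : 0 < n + 1)).mpr
          (by rw [mul_comm]; exact hcon)
        have h2 : r / (n + 1) + 1 ≤ j := Nat.not_lt.mp hj2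
        exact Nat.not_succ_le_self _ (le_trans h2 h1)
      rw [if_neg hjgt, mul_zero]
  constructor
  · exact key
  · rw [tcore_ncard r s t n hr ht1 hn]
    rw [← coeff_pow_eq_card n t r]
    exact key
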